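/- Let λ, μ ∈ ℝ and let B : h_1 × F_λ → F_μ be a nonzero sl(2)-invariant bilinear differential operator. Then either μ = λ and B(h,f) = a·h·f for some a ∈ ℝ, or (λ,μ) = ((1−k)/2, (1+k)/2) for some non-negative integer k and B(h,f) = a·h·f^{(k)} for some a ∈ ℝ. -/

import Mathlib

set_option synthInstance.maxHeartbeats 1000000
set_option maxHeartbeats 1000000


noncomputable section
open Function
open scoped ContDiff

/-- The subalgebra of smooth functions `ℝ → ℝ`. -/
def SmoothFn : Subalgebra ℝ (ℝ → ℝ) where
  carrier := {f | ContDiff ℝ ∞ f}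
  mul_mem' := fun {a b} (hf : ContDiff ℝ ∞ a) (hg : ContDiff ℝ ∞ b) => hf.mul hg
  add_mem' := fun {a b} (hf : ContDiff ℝ ∞ a) (hg : ContDiff ℝ ∞ b) => hf.add hg
  algebraMap_mem' := fun c => (contDiff_const : ContDiff ℝ ∞ (fun _ : ℝ => c))

/-- The type of smooth functions `ℝ → ℝ`, i.e. `C^∞(ℝ)`; for `λ ∈ ℝ` it also serves as
the space `F_λ` of `λ`-densities `f (dx)^λ`. -/
abbrev SF : Type := SmoothFn

theorem mem_SmoothFn {f : ℝ → ℝ} : f ∈ SmoothFn ↔ ContDiff ℝ ∞ f := ⟨fun h => h, fun h => h⟩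

/-- The derivative, as an operation on smooth functions. -/
def sderiv (f : SF) : SF :=
  ⟨deriv (f : ℝ → ℝ), mem_SmoothFn.mpr (contDiff_infty_iff_deriv.mp (mem_SmoothFn.mp f.2)).2⟩

/-- The function `x` as a smooth function. -/
def cx : SF := ⟨id, mem_SmoothFn.mpr contDiff_id⟩

/-- The Lie derivative `L^λ_{X_g}(f) = g f′ + λ f g′` of the vector field `X_g = g d/dx`
acting on `λ`-densities. -/
def Lc (lam : ℝ) (g f : SF) : SF := g * sderiv f + lam • (sderiv g * f)

/-- The generators `1, x, x²` of `sl(2) ⊂ Vect(ℝ)` (identifying `X_g ↔ g`). -/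
def sl2set : Set SF := {1, cx, cx * cx}

/-- `h₀ ⊂ F_{−1/2}`: the span of `x (dx)^{−1/2}` and `(dx)^{−1/2}`. -/
def h0sub : Submodule ℝ SF := Submodule.span ℝ {cx, 1}

/-- `h₁ ⊂ F_0`: the span of the constant function `1`. -/
def h1sub : Submodule ℝ SF := Submodule.span ℝ {1}

/-- A bilinear differential operator `h₀ × F_λ → F_μ`:
`A(h,f) = Σ_{i,j} a_{i,j} h^{(i)} f^{(j)}` with smooth coefficients. -/
def IsBilinDiffOp0 (A : h0sub → SF → SF) : Prop :=
  ∃ (N : ℕ) (a : Fin (N + 1) → Fin (N + 1) → SF),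
    ∀ (h : h0sub) (f : SF),
      A h f = ∑ i : Fin (N + 1), ∑ j : Fin (N + 1),
        a i j * (sderiv^[(i : ℕ)] h.1 * sderiv^[(j : ℕ)] f)

/-- A bilinear differential operator `h₁ × F_λ → F_μ`. -/
def IsBilinDiffOp1 (B : h1sub → SF → SF) : Prop :=
  ∃ (N : ℕ) (a : Fin (N + 1) → Fin (N + 1) → SF),
    ∀ (h : h1sub) (f : SF),
      B h f = ∑ i : Fin (N + 1), ∑ j : Fin (N + 1),
        a i j * (sderiv^[(i : ℕ)] h.1 * sderiv^[(j : ℕ)] f)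


namespace Aux

lemma SF.diff (f : SF) : Differentiable ℝ (f.1) := (mem_SmoothFn.mp f.2).differentiable (by simp)

lemma coe_sderiv (f : SF) : (sderiv f).1 = deriv f.1 := rfl

lemma coe_add (f g : SF) : (f + g).1 = f.1 + g.1 := rfl
lemma coe_mul (f g : SF) : (f * g).1 = f.1 * g.1 := rfl
lemma coe_smul (c : ℝ) (f : SF) : (c • f).1 = c • f.1 := rfl
lemma coe_one : (1 : SF).1 = fun _ => 1 := rfl
lemma coe_zero : (0 : SF).1 = fun _ => 0 := rfl

lemma sderiv_add (f g : SF) : sderiv (f + g) = sderiv f + sderiv g := by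
  apply Subtype.ext
  show deriv (f.1 + g.1) = deriv f.1 + deriv g.1
  funext x
  exact deriv_add (SF.diff f x) (SF.diff g x)

lemma sderiv_smul (c : ℝ) (f : SF) : sderiv (c • f) = c • sderiv f := by
  apply Subtype.ext
  show deriv (c • f.1) = c • deriv f.1
  funext x
  exact deriv_const_smul c (SF.diff f x)

lemma sderiv_mul (f g : SF) : sderiv (f * g) = sderiv f * g + f * sderiv g := by
  apply Subtype.ext
  show deriv (f.1 * g.1) = deriv f.1 * g.1 + f.1 * deriv g.1
  funext x
  exact deriv_mul (SF.diff f x) (SF.diff g x)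

lemma sderiv_zero : sderiv (0 : SF) = 0 := by
  apply Subtype.ext
  show deriv (fun _ => (0:ℝ)) = fun _ => 0
  funext x; simp

lemma sderiv_one : sderiv (1 : SF) = 0 := by
  apply Subtype.ext
  show deriv (fun _ => (1:ℝ)) = fun _ => 0
  funext x; simp

lemma sderiv_cx : sderiv cx = 1 := by
  apply Subtype.ext
  show deriv (id : ℝ → ℝ) = fun _ => 1
  funext x; simp

lemma sderiv_iter_add (n : ℕ) (f g : SF) : sderiv^[n] (f + g) = sderiv^[n] f + sderiv^[n] g := by
  induction n generalizing f g with
  | zero => rfl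
  | succ n ih => rw [iterate_succ_apply, iterate_succ_apply, iterate_succ_apply, sderiv_add, ih]

lemma sderiv_iter_smul (n : ℕ) (c : ℝ) (f : SF) : sderiv^[n] (c • f) = c • sderiv^[n] f := by
  induction n generalizing f with
  | zero => rfl
  | succ n ih => rw [iterate_succ_apply, iterate_succ_apply, sderiv_smul, ih]

lemma sderiv_iter_zero (n : ℕ) : sderiv^[n] (0 : SF) = 0 := iterate_fixed sderiv_zero n

/-- evaluation at a point as an algebra hom -/
def ev (t : ℝ) : SF →ₐ[ℝ] ℝ := (Pi.evalAlgHom ℝ (fun _ => ℝ) t).comp SmoothFn.val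

lemma ev_apply (t : ℝ) (f : SF) : ev t f = f.1 t := rfl

end Aux

namespace Aux

/-- `(x - t)^m` as a smooth function. -/
def pm (m : ℕ) (t : ℝ) : SF :=
  ⟨fun x => (x - t) ^ m, mem_SmoothFn.mpr (((contDiff_id).sub contDiff_const).pow m)⟩

lemma sderiv_pm (m : ℕ) (t : ℝ) : sderiv (pm m t) = (m : ℝ) • pm (m - 1) t := by
  apply Subtype.ext
  show deriv (fun x => (x - t) ^ m) = fun x => (m:ℝ) • (x - t) ^ (m-1)
  funext x
  have h : HasDerivAt (fun x : ℝ => (x - t) ^ m) ((m:ℝ) * (x - t) ^ (m-1) * 1) x :=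
    ((hasDerivAt_id x).sub_const t).pow m
  simpa [mul_one] using h.deriv

lemma sderiv_iter_pm (j m : ℕ) (t : ℝ) :
    sderiv^[j] (pm m t) = (m.descFactorial j : ℝ) • pm (m - j) t := by
  induction j generalizing m with
  | zero => simp [Nat.descFactorial]
  | succ j ih =>
    rw [iterate_succ_apply, sderiv_pm, sderiv_iter_smul, ih]
    rcases m with _ | m
    · simp
    ·
      have h1 : m + 1 - (j + 1) = m - j := by omega
      rw [h1, smul_smul, Nat.succ_descFactorial_succ]
      push_cast
      ring_nf

lemma ev_pm_self (m : ℕ) (t : ℝ) : ev t (pm m t) = if m = 0 then 1 else 0 := by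
  rcases m with _ | m
  · simp [ev_apply, pm]
  · simp [ev_apply, pm]

lemma ev_sderiv_iter_pm (j m : ℕ) (t : ℝ) :
    ev t (sderiv^[j] (pm m t)) = if j = m then (m.factorial : ℝ) else 0 := by
  rw [sderiv_iter_pm, map_smul, ev_pm_self]
  rcases eq_or_ne j m with h | h
  · subst h; simp [Nat.descFactorial_self]
  · rcases lt_or_gt_of_ne h with hlt | hgt
    · have : ¬ (m - j = 0) := by omega
      simp [h, this]
    · simp [h, Nat.descFactorial_eq_zero_iff_lt.mpr hgt]

lemma pm_succ (m : ℕ) (t : ℝ) : pm (m+1) t = (cx - t • 1) * pm m t := by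
  apply Subtype.ext
  funext x
  show (x - t)^(m+1) = (x - t * 1) * (x - t)^m
  rw [mul_one, pow_succ]; ring

lemma cx_mul_pm (m : ℕ) (t : ℝ) : cx * pm m t = pm (m+1) t + t • pm m t := by
  rw [pm_succ]
  apply Subtype.ext
  funext x
  show (x:ℝ) * (x-t)^m = (x - t*1) * (x-t)^m + t * (x-t)^m
  ring

end Aux

namespace Aux

def sderivL : SF →ₗ[ℝ] SF where
  toFun := sderiv
  map_add' := sderiv_add
  map_smul' := sderiv_smul

lemma sderiv_sum {α : Type*} (s : Finset α) (F : α → SF) :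
    sderiv (∑ i ∈ s, F i) = ∑ i ∈ s, sderiv (F i) := map_sum sderivL F s

/-- The operator `f ↦ Σ_{j<M} b_j f^{(j)}`. -/
def Top (M : ℕ) (b : ℕ → SF) (f : SF) : SF := ∑ j ∈ Finset.range M, b j * sderiv^[j] f

lemma Top_add (M : ℕ) (b : ℕ → SF) (f g : SF) :
    Top M b (f + g) = Top M b f + Top M b g := by
  simp [Top, sderiv_iter_add, mul_add, Finset.sum_add_distrib]

lemma Top_smul (M : ℕ) (b : ℕ → SF) (r : ℝ) (f : SF) :
    Top M b (r • f) = r • Top M b f := by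
  simp [Top, sderiv_iter_smul, Finset.smul_sum, mul_smul_comm]

lemma Top_zero (M : ℕ) (b : ℕ → SF) : Top M b 0 = 0 := by
  simp [Top, sderiv_iter_zero]

lemma ev_Top_pm (M : ℕ) (b : ℕ → SF) (hb : ∀ j, M ≤ j → b j = 0) (m : ℕ) (t : ℝ) :
    ev t (Top M b (pm m t)) = ev t (b m) * m.factorial := by
  have : ∀ j ∈ Finset.range M, ev t (b j * sderiv^[j] (pm m t))
      = if j = m then ev t (b j) * m.factorial else 0 := by
    intro j _
    rw [map_mul, ev_sderiv_iter_pm, mul_ite, mul_zero]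
  rw [Top, map_sum, Finset.sum_congr rfl this, Finset.sum_ite_eq']
  split_ifs with h
  · rfl
  · rw [hb m (by simpa using h)]
    simp

lemma ev_sderiv_Top_pm (M : ℕ) (b : ℕ → SF) (hb : ∀ j, M ≤ j → b j = 0) (m : ℕ) (t : ℝ) :
    ev t (sderiv (Top M b (pm m t)))
      = ev t (sderiv (b m)) * m.factorial
        + (m : ℝ) * (ev t (b (m - 1)) * (m - 1).factorial) := by
  rw [Top, sderiv_sum]
  have key : ∀ j ∈ Finset.range M, sderiv (b j * sderiv^[j] (pm m t))
      = sderiv (b j) * sderiv^[j] (pm m t)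
        + (m : ℝ) • (b j * sderiv^[j] (pm (m - 1) t)) := by
    intro j _
    rw [sderiv_mul]
    congr 1
    rw [← iterate_succ_apply' sderiv, iterate_succ_apply, sderiv_pm, sderiv_iter_smul,
      mul_smul_comm]
  rw [Finset.sum_congr rfl key, Finset.sum_add_distrib, map_add, map_sum, map_sum]
  congr 1
  · have : ∀ j ∈ Finset.range M, ev t (sderiv (b j) * sderiv^[j] (pm m t))
        = if j = m then ev t (sderiv (b j)) * m.factorial else 0 := by
      intro j _
      rw [map_mul, ev_sderiv_iter_pm, mul_ite, mul_zero]
    rw [Finset.sum_congr rfl this, Finset.sum_ite_eq']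
    split_ifs with h
    · rfl
    · rw [hb m (by simpa using h)]
      simp [sderiv_zero]
  · have : ∀ j ∈ Finset.range M, ev t ((m:ℝ) • (b j * sderiv^[j] (pm (m-1) t)))
        = if j = m - 1 then (m:ℝ) * (ev t (b j) * (m-1).factorial) else 0 := by
      intro j _
      rw [map_smul, map_mul, ev_sderiv_iter_pm, mul_ite, mul_zero, smul_eq_mul, mul_ite, mul_zero]
    rw [Finset.sum_congr rfl this, Finset.sum_ite_eq']
    split_ifs with h
    · rfl
    · rw [hb (m-1) (by simpa using h)]
      simp

end Aux

namespace Aux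

lemma ev_cx0 : ev 0 cx = 0 := rfl

lemma Lc_one (r : ℝ) (f : SF) : Lc r 1 f = sderiv f := by
  rw [Lc, sderiv_one]
  simp

lemma Lc_cx (r : ℝ) (f : SF) : Lc r cx f = cx * sderiv f + r • f := by
  rw [Lc, sderiv_cx]
  simp

lemma Lc_cx2 (r : ℝ) (f : SF) :
    Lc r (cx * cx) f = (cx * cx) * sderiv f + r • ((cx + cx) * f) := by
  rw [Lc, sderiv_mul, sderiv_cx]
  simp [add_mul, one_mul, mul_one]

lemma Lc_zero_one (g : SF) : Lc 0 g (1 : SF) = 0 := by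
  rw [Lc, sderiv_one]
  simp

lemma cx_mul_pm0 (m : ℕ) : cx * pm m 0 = pm (m + 1) 0 := by
  have := cx_mul_pm m 0
  simpa using this

lemma cx_sderiv_pm0 (m : ℕ) : cx * sderiv (pm m 0) = (m : ℝ) • pm m 0 := by
  rw [sderiv_pm, mul_smul_comm]
  rcases m with _ | m
  · simp
  · rw [Nat.add_sub_cancel, cx_mul_pm0]

lemma cx2_sderiv_pm0 (m : ℕ) : (cx * cx) * sderiv (pm m 0) = (m : ℝ) • pm (m + 1) 0 := by
  rw [mul_assoc, cx_sderiv_pm0, mul_smul_comm, cx_mul_pm0]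

end Aux

/-- Classification of nonzero `sl(2)`-invariant bilinear differential operators
`B : h₁ × F_λ → F_μ`: either `μ = λ` and `B(h,f) = a·h·f`, or
`(λ,μ) = ((1−k)/2, (1+k)/2)` for some `k ∈ ℕ` and `B(h,f) = a·h·f^{(k)}`. -/
theorem sl2_invariant_operators_h1 (lam mu : ℝ) (B : h1sub → SF → SF)
    (hdiff : IsBilinDiffOp1 B)
    (hinv : ∀ g ∈ sl2set, ∀ (h : h1sub) (hm : Lc 0 g h.1 ∈ h1sub) (f : SF),
      Lc mu g (B h f) = B ⟨Lc 0 g h.1, hm⟩ f + B h (Lc lam g f))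
    (hB : B ≠ 0) :
    (mu = lam ∧ ∃ a : ℝ, ∀ (h : h1sub) (f : SF), B h f = a • (h.1 * f)) ∨
      (∃ k : ℕ, lam = (1 - (k : ℝ)) / 2 ∧ mu = (1 + (k : ℝ)) / 2 ∧
        ∃ a : ℝ, ∀ (h : h1sub) (f : SF), B h f = a • (h.1 * sderiv^[k] f)) := by
  classical
  obtain ⟨N, a, hA⟩ := hdiff
  obtain ⟨b, hbv, hb0⟩ : ∃ b : ℕ → SF, (∀ j : Fin (N + 1), b (j : ℕ) = a 0 j)
      ∧ ∀ j, N + 1 ≤ j → b j = 0 := by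
    refine ⟨fun j => if h : j < N + 1 then a 0 ⟨j, h⟩ else 0, fun j => ?_, fun j hj => dif_neg (by omega)⟩
    simp only [j.isLt, dif_pos]
  -- the reduced formula
  have hitz : ∀ (u : SF), sderiv u = 0 → ∀ n : ℕ, n ≠ 0 → sderiv^[n] u = 0 := by
    intro u hu n hn
    rcases n with _ | n
    · exact absurd rfl hn
    · rw [iterate_succ_apply, hu, Aux.sderiv_iter_zero]
  have hred : ∀ (h : h1sub) (f : SF), B h f = h.1 * Aux.Top (N + 1) b f := by
    intro h f
    obtain ⟨r, hr⟩ := Submodule.mem_span_singleton.mp h.2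
    have hder1 : sderiv (h.1) = 0 := by
      rw [← hr, Aux.sderiv_smul, Aux.sderiv_one, smul_zero]
    rw [hA]
    rw [Finset.sum_eq_single (0 : Fin (N + 1))]
    · have hterm : ∀ j : Fin (N + 1),
          a 0 j * (sderiv^[((0 : Fin (N+1)) : ℕ)] h.1 * sderiv^[(j : ℕ)] f)
            = h.1 * (b (j : ℕ) * sderiv^[(j : ℕ)] f) := by
        intro j
        rw [hbv j]
        show a 0 j * (h.1 * sderiv^[(j : ℕ)] f) = h.1 * (a 0 j * sderiv^[(j : ℕ)] f)
        ring
      rw [Finset.sum_congr rfl (fun j _ => hterm j), ← Finset.mul_sum]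
      congr 1
      exact Fin.sum_univ_eq_sum_range (fun j => b j * sderiv^[j] f) (N + 1)
    · intro i _ hi
      have hiv : (i : ℕ) ≠ 0 := fun hv => hi (Fin.ext hv)
      rw [hitz h.1 hder1 (i : ℕ) hiv]
      simp
    · intro h0
      exact absurd (Finset.mem_univ _) h0
  have one_mem : (1 : SF) ∈ h1sub := Submodule.mem_span_singleton.mpr ⟨1, one_smul _ _⟩
  have hrel : ∀ g ∈ sl2set, ∀ f : SF,
      Lc mu g (Aux.Top (N + 1) b f) = Aux.Top (N + 1) b (Lc lam g f) := by
    intro g hg f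
    have h0m : Lc 0 g ((⟨1, one_mem⟩ : h1sub) : SF) ∈ h1sub := by
      show Lc 0 g (1 : SF) ∈ h1sub
      rw [Aux.Lc_zero_one]
      exact zero_mem _
    have hi := hinv g hg ⟨1, one_mem⟩ h0m f
    rw [hred, hred, hred] at hi
    simp only [Aux.Lc_zero_one] at hi
    simpa using hi
  -- coefficients are constant
  have hmem1 : (1 : SF) ∈ sl2set := by left; rfl
  have hmemx : cx ∈ sl2set := by right; left; rfl
  have hmemx2 : cx * cx ∈ sl2set := by right; right; rfl
  have E1 : ∀ (m : ℕ) (t : ℝ), Aux.ev t (sderiv (b m)) = 0 := by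
    intro m t
    have h2 := hrel 1 hmem1 (Aux.pm m t)
    rw [Aux.Lc_one, Aux.Lc_one] at h2
    have h3 := congrArg (Aux.ev t) h2
    rw [Aux.ev_sderiv_Top_pm (N + 1) b hb0 m t, Aux.sderiv_pm, Aux.Top_smul, map_smul,
      Aux.ev_Top_pm (N + 1) b hb0, smul_eq_mul] at h3
    have hfac : ((m.factorial : ℕ) : ℝ) ≠ 0 := Nat.cast_ne_zero.mpr m.factorial_ne_zero
    have h4 : Aux.ev t (sderiv (b m)) * (m.factorial : ℝ) = 0 := by linarith
    exact (mul_eq_zero.mp h4).resolve_right hfac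
  set c : ℕ → ℝ := fun m => Aux.ev 0 (b m) with hc
  have hbc : ∀ m, b m = c m • 1 := by
    intro m
    apply Subtype.ext
    funext x
    have hconst := is_const_of_deriv_eq_zero (Aux.SF.diff (b m)) (fun y => E1 m y) x 0
    show (b m).1 x = c m • (fun _ : ℝ => (1:ℝ)) x
    simpa [hc, Aux.ev_apply] using hconst
  have hcM : ∀ m, N + 1 ≤ m → c m = 0 := by
    intro m hm
    rw [hc]
    show Aux.ev 0 (b m) = 0
    rw [hb0 m hm, map_zero]
  have hevb : ∀ (m : ℕ) (t : ℝ), Aux.ev t (b m) = c m := by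
    intro m t
    rw [hbc m, map_smul, map_one, smul_eq_mul, mul_one]
  -- relation E2
  have E2 : ∀ m : ℕ, mu * c m = ((m : ℝ) + lam) * c m := by
    intro m
    have hfac : ((m.factorial : ℕ) : ℝ) ≠ 0 := Nat.cast_ne_zero.mpr m.factorial_ne_zero
    have h1 := hrel cx hmemx (Aux.pm m 0)
    rw [Aux.Lc_cx, Aux.Lc_cx, Aux.cx_sderiv_pm0] at h1
    simp only [Aux.Top_add, Aux.Top_smul] at h1
    have h2 := congrArg (Aux.ev 0) h1
    simp only [map_add, map_mul, map_smul, smul_eq_mul, Aux.ev_cx0,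
      Aux.ev_Top_pm (N + 1) b hb0, hevb, zero_mul, mul_zero, zero_add, add_zero] at h2
    have h3 : mu * (c m * (m.factorial : ℝ)) = ((m : ℝ) + lam) * (c m * (m.factorial : ℝ)) := by
      linarith
    have h4 : (mu * c m) * (m.factorial : ℝ) = (((m : ℝ) + lam) * c m) * (m.factorial : ℝ) := by
      ring_nf
      ring_nf at h3
      linarith
    exact mul_right_cancel₀ hfac h4
  -- relation E3
  have E3 : ∀ m : ℕ, ((m : ℝ) + 2 * lam) * c (m + 1) = 0 := by
    intro m
    have hfac : (((m+1).factorial : ℕ) : ℝ) ≠ 0 := Nat.cast_ne_zero.mpr (m+1).factorial_ne_zero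
    have h1 := hrel (cx * cx) hmemx2 (Aux.pm m 0)
    have hcc : (cx + cx) * Aux.pm m 0 = Aux.pm (m+1) 0 + Aux.pm (m+1) 0 := by
      rw [add_mul, Aux.cx_mul_pm0]
    rw [Aux.Lc_cx2, Aux.Lc_cx2, Aux.cx2_sderiv_pm0, hcc] at h1
    simp only [Aux.Top_add, Aux.Top_smul] at h1
    have h2 := congrArg (Aux.ev 0) h1
    simp only [map_add, map_mul, map_smul, smul_eq_mul, Aux.ev_cx0,
      Aux.ev_Top_pm (N + 1) b hb0, hevb, zero_mul, mul_zero, zero_add, add_zero] at h2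
    have h3 : (((m : ℝ) + 2 * lam) * c (m + 1)) * (((m+1).factorial : ℕ) : ℝ) = 0 := by
      ring_nf
      ring_nf at h2
      linarith
    exact (mul_eq_zero.mp h3).resolve_right hfac
  -- case analysis
  by_cases hall : ∀ j, c j = 0
  · exfalso
    apply hB
    funext h f
    show B h f = 0
    rw [hred]
    have hT : Aux.Top (N + 1) b f = 0 := by
      unfold Aux.Top
      apply Finset.sum_eq_zero
      intro j _
      rw [hbc j, hall j, zero_smul, zero_mul]
    rw [hT, mul_zero]
  · push_neg at hall
    obtain ⟨m, hm⟩ := hall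
    have hmu : mu = (m : ℝ) + lam := mul_right_cancel₀ hm (E2 m)
    have hcj : ∀ j : ℕ, j ≠ m → c j = 0 := by
      intro j hj
      by_contra hjz
      have h2 : mu = (j : ℝ) + lam := mul_right_cancel₀ hjz (E2 j)
      have h3 : (m : ℝ) = (j : ℝ) := by linarith
      exact hj (Nat.cast_injective h3).symm
    have hmM : m < N + 1 := by
      by_contra hcon
      exact hm (hcM m (le_of_not_gt hcon))
    have hform : ∀ (h : h1sub) (f : SF), B h f = c m • (h.1 * sderiv^[m] f) := by
      intro h f
      rw [hred]
      have hT : Aux.Top (N + 1) b f = c m • sderiv^[m] f := by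
        unfold Aux.Top
        rw [Finset.sum_eq_single m]
        · rw [hbc m, smul_mul_assoc, one_mul]
        · intro j _ hj
          rw [hbc j, hcj j hj, zero_smul, zero_mul]
        · intro hnot
          exact absurd (Finset.mem_range.mpr hmM) hnot
      rw [hT, mul_smul_comm]
    rcases m with _ | k
    · left
      refine ⟨by rw [hmu]; simp, c 0, fun h f => hform h f⟩
    · right
      have h3 := E3 k
      have h4 : (k : ℝ) + 2 * lam = 0 := (mul_eq_zero.mp h3).resolve_right hm
      refine ⟨k + 1, by push_cast; linarith, by rw [hmu]; push_cast; linarith, c (k + 1), hform⟩
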